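/- arXiv:2601.03998 — 2 statements merged into one kernel-verified Lean document; each statement's English description precedes it below -/
import Mathlib

section
/- For |q|<1, one has ∑_{n≥1} q^{(2n-1)(n-1)}/((1+q^{2n})·(-q;q)_{2n-2}) = 1 − q·∑_{n≥1} q^{2n²-n}/(-q;q)_{2n}. -/
open scoped BigOperators

open Filter Finset

/-- The finite q-Pochhammer symbol `(a;q)_n = ∏_{j=0}^{n-1} (1 - a q^j)`. -/
noncomputable def qPoch (a q : ℂ) (n : ℕ) : ℂ := ∏ j ∈ Finset.range n, (1 - a * q ^ j)

lemma qPoch_norm_lower (q : ℂ) (hq : ‖q‖ < 1) (m : ℕ) :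
    (1 - ‖q‖) ^ m ≤ ‖qPoch (-q) q m‖ := by
  rw [qPoch, norm_prod]
  calc (1 - ‖q‖) ^ m = ∏ _i ∈ Finset.range m, (1 - ‖q‖) := by simp
    _ ≤ _ := Finset.prod_le_prod (fun i _ => by linarith) (fun i _ => ?_)
  have h1 : ‖(-q) * q ^ i‖ ≤ ‖q‖ := by
    rw [norm_mul, norm_neg]
    calc ‖q‖ * ‖q ^ i‖ ≤ ‖q‖ * 1 := by
          refine mul_le_mul_of_nonneg_left ?_ (norm_nonneg q)
          rw [norm_pow]
          exact pow_le_one₀ (norm_nonneg q) hq.le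
      _ = ‖q‖ := mul_one _
  calc 1 - ‖q‖ ≤ 1 - ‖(-q) * q ^ i‖ := by linarith
    _ ≤ ‖1 - (-q) * q ^ i‖ := by
        have := norm_sub_norm_le (1 : ℂ) ((-q) * q ^ i)
        simpa using this

lemma qPoch_ne_zero (q : ℂ) (hq : ‖q‖ < 1) (m : ℕ) : qPoch (-q) q m ≠ 0 := by
  have h1 : (0:ℝ) < 1 - ‖q‖ := by linarith
  have := qPoch_norm_lower q hq m
  have : (0:ℝ) < ‖qPoch (-q) q m‖ := lt_of_lt_of_le (pow_pos h1 m) this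
  exact norm_pos_iff.mp this

lemma one_add_pow_ne_zero (q : ℂ) (hq : ‖q‖ < 1) (k : ℕ) : 1 + q ^ (k + 1) ≠ 0 := by
  intro h
  have : q ^ (k+1) = -1 := by linear_combination h
  have : ‖q ^ (k+1)‖ = 1 := by rw [this]; simp
  rw [norm_pow] at this
  have h2 : ‖q‖ ^ (k+1) < 1 := pow_lt_one₀ (norm_nonneg q) hq (Nat.succ_ne_zero k)
  linarith

lemma one_add_norm_lower (q : ℂ) (hq : ‖q‖ < 1) (k : ℕ) :
    1 - ‖q‖ ≤ ‖1 + q ^ (k + 1)‖ := by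
  have h1 : ‖q ^ (k+1)‖ ≤ ‖q‖ := by
    rw [norm_pow, pow_succ]
    calc ‖q‖ ^ k * ‖q‖ ≤ 1 * ‖q‖ := by
          exact mul_le_mul_of_nonneg_right (pow_le_one₀ (norm_nonneg q) hq.le) (norm_nonneg q)
      _ = ‖q‖ := one_mul _
  calc 1 - ‖q‖ ≤ 1 - ‖q ^ (k+1)‖ := by linarith
    _ ≤ ‖1 + q ^ (k+1)‖ := by
        have := norm_sub_norm_le (1 : ℂ) (-(q ^ (k+1)))
        simpa [sub_neg_eq_add] using this

/-- dominating sequence -/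
noncomputable def gdom (x : ℝ) (n : ℕ) : ℝ := x ^ (n ^ 2) / (1 - x) ^ (2 * n + 2)

lemma gdom_summable {x : ℝ} (h0 : 0 ≤ x) (h1 : x < 1) : Summable (gdom x) := by
  have hpos : (0:ℝ) < 1 - x := by linarith
  set y : ℝ := (1 - x)⁻¹ with hy
  have hy0 : 0 < y := inv_pos.mpr hpos
  -- find N with x^N * y^2 ≤ 1/2
  obtain ⟨N, hN⟩ : ∃ N : ℕ, x ^ N < (1/2) * (y^2)⁻¹ := by
    rcases eq_or_lt_of_le h0 with h | h
    · exact ⟨1, by rw [← h]; simpa using by positivity⟩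
    · exact exists_pow_lt_of_lt_one (by positivity) h1
  set r : ℝ := x ^ N * y ^ 2 with hr
  have hr0 : 0 ≤ r := by positivity
  have hr1 : r < 1 := by
    have : x ^ N * y ^ 2 < ((1/2) * (y^2)⁻¹) * y ^ 2 :=
      mul_lt_mul_of_pos_right hN (by positivity)
    calc r < ((1/2) * (y^2)⁻¹) * y ^ 2 := this
      _ = 1/2 := by field_simp
      _ < 1 := by norm_num
  have hsum : Summable (fun n => y ^ 2 * r ^ n) :=
    (summable_geometric_of_lt_one hr0 hr1).mul_left _
  refine Summable.of_norm_bounded_eventually_nat hsum ?_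
  filter_upwards [Filter.eventually_ge_atTop N] with n hn
  have hxn : x ^ n ≤ x ^ N := pow_le_pow_of_le_one h0 h1.le hn
  have hgnn : 0 ≤ gdom x n := by
    unfold gdom; positivity
  rw [Real.norm_eq_abs, abs_of_nonneg hgnn]
  have hstep : gdom x n = x ^ (n^2) * y ^ (2*n) * y ^ 2 := by
    rw [gdom, div_eq_mul_inv, ← inv_pow, ← hy]
    ring
  rw [hstep]
  have h1' : x ^ (n^2) ≤ (x ^ N) ^ n := by
    calc x ^ (n^2) = (x ^ n) ^ n := by rw [← pow_mul, sq]
      _ ≤ (x ^ N) ^ n := pow_le_pow_left₀ (by positivity) hxn n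
  calc x ^ (n^2) * y ^ (2*n) * y ^ 2 ≤ (x ^ N) ^ n * y ^ (2*n) * y ^ 2 := by
        refine mul_le_mul_of_nonneg_right (mul_le_mul_of_nonneg_right h1' (by positivity)) (by positivity)
    _ = y ^ 2 * r ^ n := by rw [hr, mul_pow, ← pow_mul]; ring

/-- For |q|<1,
`∑_{n≥1} q^{(2n-1)(n-1)}/((1+q^{2n})(-q;q)_{2n-2}) = 1 - q ∑_{n≥1} q^{2n²-n}/(-q;q)_{2n}`. -/
theorem stmt_8 (q : ℂ) (hq : ‖q‖ < 1) :
    ∑' n : ℕ, q ^ ((2 * n + 1) * n) / ((1 + q ^ (2 * (n + 1))) * qPoch (-q) q (2 * n))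
      = 1 - q * ∑' n : ℕ, q ^ (2 * (n + 1) ^ 2 - (n + 1)) / qPoch (-q) q (2 * (n + 1)) := by
  have hx0 : (0:ℝ) ≤ ‖q‖ := norm_nonneg q
  have hpos : (0:ℝ) < 1 - ‖q‖ := by linarith
  set x : ℝ := ‖q‖ with hxdef
  set A : ℕ → ℂ := fun n => q ^ ((2 * n + 1) * n) / ((1 + q ^ (2 * (n + 1))) * qPoch (-q) q (2 * n)) with hA
  set R : ℕ → ℂ := fun n => q ^ (2 * (n + 1) ^ 2 - (n + 1)) / qPoch (-q) q (2 * (n + 1)) with hRdef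
  set u : ℕ → ℂ := fun n => q ^ (n * (2 * n + 1)) / qPoch (-q) q (2 * n) with hu
  have hg := gdom_summable hx0 hq
  -- generic norm bound
  have hbound : ∀ (e d m : ℕ), m ^ 2 ≤ e → d ≤ 2 * m + 2 →
      ‖q ^ e / qPoch (-q) q d‖ ≤ gdom x m := by
    intro e d m he hd
    rw [norm_div, norm_pow, gdom]
    refine div_le_div₀ (by positivity) (pow_le_pow_of_le_one hx0 hq.le he) (by positivity) ?_
    calc (1 - x) ^ (2*m+2) ≤ (1 - x) ^ d :=
          pow_le_pow_of_le_one hpos.le (by linarith) hd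
      _ ≤ ‖qPoch (-q) q d‖ := qPoch_norm_lower q hq d
  -- summability of A
  have hAsum : Summable A := by
    refine Summable.of_norm_bounded hg ?_
    intro n
    have h1 : ‖A n‖ = ‖q‖ ^ ((2*n+1)*n) / (‖1 + q ^ (2*(n+1))‖ * ‖qPoch (-q) q (2*n)‖) := by
      rw [hA]; simp [norm_div, norm_mul, norm_pow]
    rw [h1]
    rw [gdom]
    refine div_le_div₀ (by positivity) (pow_le_pow_of_le_one hx0 hq.le (by nlinarith)) (by positivity) ?_
    have hc : 1 - x ≤ ‖1 + q ^ (2*(n+1))‖ := by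
      have := one_add_norm_lower q hq (2*n+1)
      simpa [show 2*n+1+1 = 2*(n+1) by ring] using this
    have hp : (1-x) ^ (2*n+1) ≤ ‖qPoch (-q) q (2*n)‖ := by
      calc (1-x)^(2*n+1) ≤ (1-x)^(2*n) := pow_le_pow_of_le_one hpos.le (by linarith) (by omega)
        _ ≤ _ := qPoch_norm_lower q hq (2*n)
    calc (1-x)^(2*n+2) = (1-x) * (1-x)^(2*n+1) := by ring
      _ ≤ ‖1 + q ^ (2*(n+1))‖ * ‖qPoch (-q) q (2*n)‖ :=
          mul_le_mul hc hp (by positivity) (norm_nonneg _)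
  -- summability of R
  have hexp : ∀ n : ℕ, 2 * (n + 1) ^ 2 - (n + 1) = 2*n^2+3*n+1 := by
    intro n
    have : 2 * (n + 1) ^ 2 = (2*n^2+3*n+1) + (n+1) := by ring
    omega
  have hRsum : Summable R := by
    refine Summable.of_norm_bounded hg ?_
    intro n
    refine hbound _ _ n ?_ ?_
    · rw [hexp n]; nlinarith
    · omega
  -- tendsto of u
  have hunorm : ∀ n, ‖u n‖ ≤ gdom x n := by
    intro n
    exact hbound _ _ n (by nlinarith) (by omega)
  have hu0 : Filter.Tendsto u Filter.atTop (nhds 0) := by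
    rw [tendsto_zero_iff_norm_tendsto_zero]
    exact squeeze_zero (fun n => norm_nonneg _) hunorm hg.tendsto_atTop_zero
  -- telescoping identity
  have hkey : ∀ n : ℕ, A n + q * R n = u n - u (n + 1) := by
    intro n
    have hP0 : qPoch (-q) q (2*n) ≠ 0 := qPoch_ne_zero q hq _
    have hc1 : 1 + q ^ (2*n+1) ≠ 0 := by
      have := one_add_pow_ne_zero q hq (2*n)
      simpa using this
    have hc2 : 1 + q ^ (2*(n+1)) ≠ 0 := by
      have := one_add_pow_ne_zero q hq (2*n+1)
      simpa [show 2*n+1+1 = 2*(n+1) by ring] using this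
    have hstep : qPoch (-q) q (2*(n+1)) = qPoch (-q) q (2*n) * (1 + q ^ (2*n+1)) * (1 + q ^ (2*(n+1))) := by
      rw [show 2*(n+1) = (2*n+1)+1 by ring, qPoch, Finset.prod_range_succ, Finset.prod_range_succ, ← qPoch]
      ring_nf
    rw [hA, hRdef, hu]
    simp only
    rw [hexp n, hstep]
    rw [show 2*(n+1) = (2*n+1)+1 by ring] at hc2 ⊢
    field_simp
    ring
  -- HasSum of the telescoping series
  have hsumAT : Summable (fun n => A n + q * R n) := hAsum.add (hRsum.mul_left q)
  have hpartial : ∀ N : ℕ, ∑ i ∈ Finset.range N, (A i + q * R i) = 1 - u N := by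
    intro N
    have : ∑ i ∈ Finset.range N, (A i + q * R i) = ∑ i ∈ Finset.range N, (u i - u (i+1)) :=
      Finset.sum_congr rfl (fun i _ => hkey i)
    rw [this, Finset.sum_range_sub' u]
    have : u 0 = 1 := by
      rw [hu]; simp [qPoch]
    rw [this]
  have hHS : HasSum (fun n => A n + q * R n) 1 := by
    rw [hsumAT.hasSum_iff_tendsto_nat]
    simp only [hpartial]
    have : Filter.Tendsto (fun N => (1:ℂ) - u N) Filter.atTop (nhds (1 - 0)) :=
      Filter.Tendsto.sub tendsto_const_nhds hu0
    simpa using this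
  have := hHS.tsum_eq
  rw [hAsum.tsum_add (hRsum.mul_left q), tsum_mul_left] at this
  linear_combination this
end

section
/- For |q|<1 and any complex ζ with |ζq|<1, the identity 1 + ∑_{n≥1} (-1)^n (ζ^{3n-1} q^{n(3n-1)/2} + ζ^{3n} q^{n(3n+1)/2}) = ∑_{n≥0} (-1)^n ζ^{2n} q^{n(n+1)/2}/(ζq;q)_n holds. -/
open scoped BigOperators

set_option maxHeartbeats 1600000

open Filter Topology

noncomputable def cc (q w : ℂ) (n : ℕ) : ℂ :=
  (-1)^n * w^(2*n) * q^(n*(n+1)/2) / qPoch (w*q) q n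

lemma qPoch_zero (a q : ℂ) : qPoch a q 0 = 1 := by simp [qPoch]

lemma qPoch_succ (a q : ℂ) (n : ℕ) : qPoch a q (n+1) = qPoch a q n * (1 - a * q^n) := by
  simp [qPoch, Finset.prod_range_succ]

lemma qPoch_shift (a q : ℂ) (n : ℕ) : qPoch a q (n+1) = (1 - a) * qPoch (a*q) q n := by
  unfold qPoch
  rw [Finset.prod_range_succ']
  rw [mul_comm]
  congr 1
  · simp
  · exact Finset.prod_congr rfl fun x _ => by rw [pow_succ]; ring

lemma qPoch_ne_zero_s9 (a q : ℂ) (h : ∀ k, (1:ℂ) - a * q^k ≠ 0) (n : ℕ) : qPoch a q n ≠ 0 := by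
  unfold qPoch
  rw [Finset.prod_ne_zero_iff]
  exact fun i _ => h i

lemma summable_of_rec {𝕜 : Type*} [NormedField 𝕜] [CompleteSpace 𝕜] (f g : ℕ → 𝕜)
    (hrec : ∀ n, f (n+1) = g n * f n) (hg : Tendsto g atTop (𝓝 0)) : Summable f := by
  apply summable_of_ratio_norm_eventually_le (r := 1/2) (by norm_num)
  have : ∀ᶠ n in atTop, ‖g n‖ ≤ 1/2 := by
    have := hg.norm
    simp only [norm_zero] at this
    exact this.eventually_le_const (by norm_num)
  filter_upwards [this] with n hn
  rw [hrec n, norm_mul]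
  exact mul_le_mul_of_nonneg_right hn (norm_nonneg _)


lemma tendsto_aux (q c d : ℂ) (hq : ‖q‖ < 1) :
    Tendsto (fun n : ℕ => c * q^n / (1 - d * q^n)) atTop (𝓝 0) := by
  have h1 : Tendsto (fun n : ℕ => q^n) atTop (𝓝 0) :=
    tendsto_pow_atTop_nhds_zero_of_norm_lt_one hq
  have h2 : Tendsto (fun n : ℕ => c * q^n) atTop (𝓝 0) := by
    simpa using h1.const_mul c
  have h3 : Tendsto (fun n : ℕ => 1 - d * q^n) atTop (𝓝 (1 - d*0)) :=
    tendsto_const_nhds.sub (h1.const_mul d)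
  rw [mul_zero, sub_zero] at h3
  have h4 := h2.div h3 one_ne_zero
  rw [zero_div] at h4
  exact h4

theorem FE (q w : ℂ) (hq : ‖q‖ < 1) (hfac : ∀ k : ℕ, (1:ℂ) - w*q*q^k ≠ 0) :
    ∑' n, cc q w n = 1 - w^2*q - w^3*q^2 * ∑' n, cc q (w*q) n := by
  have hwq : (1:ℂ) - w*q ≠ 0 := by simpa using hfac 0
  have hfac2 : ∀ k : ℕ, (1:ℂ) - w*q*q*q^k ≠ 0 := by
    intro k; have := hfac (k+1); rw [pow_succ] at this
    intro h; apply this; rw [← h]; ring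
  have hP2 : ∀ n, qPoch (w*q*q) q n ≠ 0 :=
    qPoch_ne_zero_s9 _ _ (fun k => hfac2 k)
  have hP : ∀ n, qPoch (w*q) q n ≠ 0 :=
    qPoch_ne_zero_s9 _ _ (fun k => hfac k)
  set e : ℕ → ℂ := fun m => (-1)^m * w^(2*m) * q^(m*(m+3)/2) / qPoch (w*q*q) q m with he
  have f1 : ∀ m, cc q w (m+1) = (-(w^2*q) / (1 - w*q)) * e m := by
    intro m
    have hexp : (m+1)*((m+1)+1)/2 = m*(m+3)/2 + 1 := by
      have h : (m+1)*((m+1)+1) = m*(m+3) + 2 := by ring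
      omega
    simp only [cc, he]
    rw [qPoch_shift, hexp, pow_add,
        show 2*(m+1) = 2*m + 2 from by ring, pow_add]
    field_simp
    ring
  have f2' : ∀ m, e (m+1) * (1 - w*q*q*q^m) = -(w^2*q^2) * (e m * q^m) := by
    intro m
    have hexp : (m+1)*((m+1)+3)/2 = m*(m+3)/2 + (m+2) := by
      have h : (m+1)*((m+1)+3) = m*(m+3) + 2*(m+2) := by ring
      omega
    simp only [he]
    rw [qPoch_succ, hexp,
        show q^(m*(m+3)/2 + (m+2)) = q^(m*(m+3)/2) * (q^m * q^2) from by
          rw [pow_add, show q^(m+2) = q^m*q^2 from by rw [← pow_add]]]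
    rw [div_mul_eq_mul_div, mul_div_mul_right _ _ (hfac2 m), pow_succ,
      show 2*(m+1) = 2*m+2 from by ring, pow_add]
    ring
  have f2 : ∀ m, e (m+1) = (-(w^2*q^2) * q^m / (1 - w*q*q*q^m)) * e m := by
    intro m
    rw [div_mul_eq_mul_div, eq_div_iff (hfac2 m)]
    linear_combination f2' m
  have f3 : ∀ m, cc q (w*q) m = e m * q^m := by
    intro m
    simp only [cc, he]
    rw [div_mul_eq_mul_div]
    congr 1
    rw [mul_pow,
        show (-1:ℂ)^m * (w^(2*m) * q^(2*m)) * q^(m*(m+1)/2)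
           = (-1)^m * w^(2*m) * (q^(2*m) * q^(m*(m+1)/2)) from by ring,
        show (-1:ℂ)^m * w^(2*m) * q^(m*(m+3)/2) * q^m
           = (-1)^m * w^(2*m) * (q^(m*(m+3)/2) * q^m) from by ring,
        ← pow_add, ← pow_add]
    rw [show 2*m + m*(m+1)/2 = m*(m+3)/2 + m from by
      have h : m*(m+3) = m*(m+1) + 2*m := by ring
      omega]
  -- summability
  have Se : Summable e :=
    summable_of_rec e _ f2 (tendsto_aux q (-(w^2*q^2)) (w*q*q) hq)
  have Seq : Summable (fun m => e m * q^m) := by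
    apply summable_of_rec _ (fun m => (-(w^2*q^2) * q^m / (1 - w*q*q*q^m)) * q)
    · intro n
      rw [f2 n, pow_succ]
      ring
    · have h := (tendsto_aux q (-(w^2*q^2)) (w*q*q) hq).mul_const q
      rw [zero_mul] at h
      exact h
  have Sc : Summable (cc q w) := by
    apply (summable_nat_add_iff 1).mp
    apply Summable.congr (Se.mul_left (-(w^2*q) / (1 - w*q)))
    intro n
    exact (f1 n).symm
  have Scq : Summable (cc q (w*q)) := Seq.congr (fun m => (f3 m).symm)
  have e0 : e 0 = 1 := by simp [he, qPoch_zero]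
  have cc0 : cc q w 0 = 1 := by simp [cc, qPoch_zero]
  -- sum the recurrence
  set G : ℂ := ∑' m, e m * q^m with hG
  have hshift : Summable (fun m => e (m+1) * q^(m+1)) :=
    (summable_nat_add_iff 1).mpr Seq
  have key1 : (∑' m, e m) - 1 = -(w^2*q^2) * G + (w*q) * (G - 1) := by
    have hterm : ∀ m, e (m+1) = (-(w^2*q^2)) * (e m * q^m) + (w*q) * (e (m+1) * q^(m+1)) := by
      intro m
      linear_combination f2' m
    have hs1 : Summable (fun m => (-(w^2*q^2)) * (e m * q^m)) := Seq.mul_left _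
    have hs2 : Summable (fun m => (w*q) * (e (m+1) * q^(m+1))) := hshift.mul_left _
    calc (∑' m, e m) - 1
        = ∑' m, e (m+1) := by rw [Se.tsum_eq_zero_add, e0]; ring
      _ = ∑' m, ((-(w^2*q^2)) * (e m * q^m) + (w*q) * (e (m+1) * q^(m+1))) :=
          tsum_congr hterm
      _ = (∑' m, (-(w^2*q^2)) * (e m * q^m)) + ∑' m, (w*q) * (e (m+1) * q^(m+1)) :=
          Summable.tsum_add hs1 hs2
      _ = -(w^2*q^2) * G + (w*q) * (G - 1) := by
          rw [tsum_mul_left, tsum_mul_left, hG]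
          have h1 : ∑' m, e (m+1) * q^(m+1) = (∑' m, e m * q^m) - 1 := by
            rw [Seq.tsum_eq_zero_add, e0]
            simp
          rw [h1]
  have key2 : ∑' n, cc q w n = 1 + (-(w^2*q) / (1 - w*q)) * ∑' m, e m := by
    rw [Sc.tsum_eq_zero_add, cc0]
    congr 1
    rw [← tsum_mul_left]
    exact tsum_congr f1
  -- combine
  have hE : ∑' m, e m = 1 - w*q + (w*q - w^2*q^2) * G := by
    linear_combination key1
  have hG2 : ∑' n, cc q (w*q) n = G := by rw [hG]; exact tsum_congr f3
  rw [key2, hE, hG2]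
  field_simp
  ring

theorem iter (q z : ℂ) (hq : ‖q‖ < 1) (hfac : ∀ k : ℕ, (1:ℂ) - z*q*q^k ≠ 0) (N : ℕ) :
    ∑' n, cc q z n = (∑ n ∈ Finset.range N, ((-1)^n * z^(3*n) * q^(n*(3*n+1)/2)
        + (-1)^(n+1) * z^(3*n+2) * q^((n+1)*(3*n+2)/2)))
      + (-1)^N * z^(3*N) * q^(N*(3*N+1)/2) * ∑' n, cc q (z*q^N) n := by
  induction N with
  | zero => simp
  | succ N ih =>
    have hfacN : ∀ k : ℕ, (1:ℂ) - (z*q^N)*q*q^k ≠ 0 := by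
      intro k
      have h0 : z*q^N*q*q^k = z*q*q^(N+k) := by rw [pow_add]; ring
      rw [h0]; exact hfac (N+k)
    have hzq : z*q^N*q = z*q^(N+1) := by rw [pow_succ, ← mul_assoc]
    rw [ih, FE q (z*q^N) hq hfacN, hzq, Finset.sum_range_succ]
    have e1 : q^((N+1)*(3*N+2)/2) = q^(N*(3*N+1)/2) * q^(2*N+1) := by
      rw [← pow_add]
      congr 1
      have h : (N+1)*(3*N+2) = N*(3*N+1) + 2*(2*N+1) := by ring
      omega
    have e2 : q^((N+1)*(3*(N+1)+1)/2) = q^(N*(3*N+1)/2) * q^(3*N+2) := by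
      rw [← pow_add]
      congr 1
      have h : (N+1)*(3*(N+1)+1) = N*(3*N+1) + 2*(3*N+2) := by ring
      omega
    rw [e1, e2]
    ring

theorem bridge (q z : ℂ) (N : ℕ) :
    1 + (∑ n ∈ Finset.range N, (-1 : ℂ) ^ (n + 1) *
        (z ^ (3 * (n + 1) - 1) * q ^ ((n + 1) * (3 * (n + 1) - 1) / 2)
          + z ^ (3 * (n + 1)) * q ^ ((n + 1) * (3 * (n + 1) + 1) / 2)))
      = (∑ n ∈ Finset.range N, ((-1)^n * z^(3*n) * q^(n*(3*n+1)/2)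
          + (-1)^(n+1) * z^(3*n+2) * q^((n+1)*(3*n+2)/2)))
        + (-1)^N * z^(3*N) * q^(N*(3*N+1)/2) := by
  induction N with
  | zero => simp
  | succ N ih =>
    rw [Finset.sum_range_succ, Finset.sum_range_succ]
    have e0 : 3*(N+1) - 1 = 3*N+2 := by omega
    have e1 : q^((N+1)*(3*N+2)/2) = q^(N*(3*N+1)/2) * q^(2*N+1) := by
      rw [← pow_add]
      congr 1
      have h : (N+1)*(3*N+2) = N*(3*N+1) + 2*(2*N+1) := by ring
      omega
    have e2 : q^((N+1)*(3*(N+1)+1)/2) = q^(N*(3*N+1)/2) * q^(3*N+2) := by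
      rw [← pow_add]
      congr 1
      have h : (N+1)*(3*(N+1)+1) = N*(3*N+1) + 2*(3*N+2) := by ring
      omega
    rw [e0, e1, e2]
    linear_combination ih

/-- For |q|<1 and |ζq|<1 (with nonvanishing denominators),
`1 + ∑_{n≥1} (-1)^n (ζ^{3n-1} q^{n(3n-1)/2} + ζ^{3n} q^{n(3n+1)/2})
  = ∑_{n≥0} (-1)^n ζ^{2n} q^{n(n+1)/2}/(ζq;q)_n`. -/
theorem stmt_9 (q ζ : ℂ) (hq : ‖q‖ < 1) (hζq : ‖ζ * q‖ < 1)
    (hden : ∀ n : ℕ, qPoch (ζ * q) q n ≠ 0) :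
    1 + ∑' n : ℕ, (-1 : ℂ) ^ (n + 1) *
        (ζ ^ (3 * (n + 1) - 1) * q ^ ((n + 1) * (3 * (n + 1) - 1) / 2)
          + ζ ^ (3 * (n + 1)) * q ^ ((n + 1) * (3 * (n + 1) + 1) / 2))
      = ∑' n : ℕ, (-1 : ℂ) ^ n * ζ ^ (2 * n) * q ^ (n * (n + 1) / 2) / qPoch (ζ * q) q n := by
  have hq0 : (0:ℝ) ≤ ‖q‖ := norm_nonneg q
  have hr0 : (0:ℝ) ≤ ‖ζ * q‖ := norm_nonneg _
  have hr1 : (0:ℝ) < 1 - ‖ζ * q‖ := by linarith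
  have hfac : ∀ k : ℕ, (1:ℂ) - ζ*q*q^k ≠ 0 := by
    intro k
    have h := hden (k+1)
    unfold qPoch at h
    exact Finset.prod_ne_zero_iff.mp h k (Finset.mem_range.mpr (by omega))
  -- the bound sequence
  set B : ℕ → ℝ := fun n => ‖ζ‖^(2*n) * ‖q‖^(n*(n+1)/2) / (1 - ‖ζ*q‖)^n with hB
  have SB : Summable B := by
    apply summable_of_rec B (fun n => (‖ζ‖^2 * ‖q‖ / (1 - ‖ζ*q‖)) * ‖q‖^n)
    · intro n
      rw [hB]
      simp only
      rw [show (n+1)*((n+1)+1)/2 = n*(n+1)/2 + (n+1) from by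
            have h : (n+1)*((n+1)+1) = n*(n+1) + 2*(n+1) := by ring
            omega,
          pow_add, show 2*(n+1) = 2*n+2 from by ring, pow_add,
          show ‖q‖^(n+1) = ‖q‖^n * ‖q‖ from by rw [pow_succ]]
      field_simp
      ring
    · have h := (tendsto_pow_atTop_nhds_zero_of_lt_one hq0 hq).const_mul
        (‖ζ‖^2 * ‖q‖ / (1 - ‖ζ*q‖))
      simpa using h
  -- termwise bound, uniform in N
  have hcb : ∀ N n : ℕ, ‖cc q (ζ*q^N) n‖ ≤ B n := by
    intro N n
    have hden2 : ∀ n, (1 - ‖ζ*q‖)^n ≤ ‖qPoch ((ζ*q^N)*q) q n‖ := by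
      intro m
      unfold qPoch
      rw [norm_prod]
      rw [show (1 - ‖ζ*q‖)^m = ∏ _j ∈ Finset.range m, (1 - ‖ζ*q‖) from by
            rw [Finset.prod_const, Finset.card_range]]
      apply Finset.prod_le_prod
      · intro i _; linarith
      · intro i _
        have h1 : ‖ζ*q^N*q*q^i‖ ≤ ‖ζ*q‖ := by
          rw [show ζ*q^N*q*q^i = (ζ*q)*q^(N+i) from by rw [pow_add]; ring, norm_mul]
          calc ‖ζ*q‖ * ‖q^(N+i)‖ ≤ ‖ζ*q‖ * 1 := by
                apply mul_le_mul_of_nonneg_left _ hr0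
                rw [norm_pow]
                exact pow_le_one₀ hq0 (le_of_lt hq)
            _ = ‖ζ*q‖ := mul_one _
        have h2 : (1:ℝ) - ‖ζ*q^N*q*q^i‖ ≤ ‖1 - ζ*q^N*q*q^i‖ := by
          have := norm_sub_norm_le (1:ℂ) (ζ*q^N*q*q^i)
          simpa using this
        linarith
    have hnum : ‖(-1:ℂ)^n * (ζ*q^N)^(2*n) * q^(n*(n+1)/2)‖
        ≤ ‖ζ‖^(2*n) * ‖q‖^(n*(n+1)/2) := by
      rw [norm_mul, norm_mul, norm_pow, norm_pow, norm_pow, norm_neg, norm_one, one_pow,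
          one_mul]
      apply mul_le_mul_of_nonneg_right _ (pow_nonneg hq0 _)
      apply pow_le_pow_left₀ (norm_nonneg _)
      rw [norm_mul]
      calc ‖ζ‖ * ‖q^N‖ ≤ ‖ζ‖ * 1 := by
            apply mul_le_mul_of_nonneg_left _ (norm_nonneg ζ)
            rw [norm_pow]
            exact pow_le_one₀ hq0 (le_of_lt hq)
        _ = ‖ζ‖ := mul_one _
    unfold cc
    rw [norm_div, hB]
    exact div_le_div₀ (by positivity) hnum (by positivity) (hden2 n)
  have SN : ∀ N : ℕ, Summable (fun n => ‖cc q (ζ*q^N) n‖) := by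
    intro N
    exact Summable.of_nonneg_of_le (fun n => norm_nonneg _) (hcb N) SB
  set MB : ℝ := ∑' n, B n with hMB
  have hbound : ∀ N : ℕ, ‖∑' n, cc q (ζ*q^N) n‖ ≤ MB := by
    intro N
    calc ‖∑' n, cc q (ζ*q^N) n‖ ≤ ∑' n, ‖cc q (ζ*q^N) n‖ :=
          norm_tsum_le_tsum_norm (SN N)
      _ ≤ MB := Summable.tsum_le_tsum (hcb N) (SN N) SB
  -- helper norm bound
  have hkey : ∀ (a e n : ℕ), a ≤ e → 3*n ≤ a → ‖ζ‖^a * ‖q‖^e ≤ (‖ζ*q‖^3)^n := by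
    intro a e n h1 h2
    calc ‖ζ‖^a * ‖q‖^e ≤ ‖ζ‖^a * ‖q‖^a := by
          apply mul_le_mul_of_nonneg_left _ (pow_nonneg (norm_nonneg ζ) a)
          exact pow_le_pow_of_le_one hq0 hq.le h1
      _ = ‖ζ*q‖^a := by rw [norm_mul, mul_pow]
      _ ≤ ‖ζ*q‖^(3*n) := pow_le_pow_of_le_one hr0 hζq.le h2
      _ = (‖ζ*q‖^3)^n := by rw [pow_mul]
  set T : ℕ → ℂ := fun n => (-1 : ℂ) ^ (n + 1) *
        (ζ ^ (3 * (n + 1) - 1) * q ^ ((n + 1) * (3 * (n + 1) - 1) / 2)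
          + ζ ^ (3 * (n + 1)) * q ^ ((n + 1) * (3 * (n + 1) + 1) / 2)) with hT
  have hTbd : ∀ n : ℕ, 1 ≤ n → ‖T n‖ ≤ 2 * (‖ζ*q‖^3)^n := by
    intro n hn
    rw [hT]
    simp only
    rw [norm_mul, norm_pow, norm_neg, norm_one, one_pow, one_mul]
    have e0 : 3*(n+1) - 1 = 3*n+2 := by omega
    rw [e0]
    have hx : ‖ζ ^ (3*n+2) * q ^ ((n+1)*(3*n+2)/2)‖ ≤ (‖ζ*q‖^3)^n := by
      rw [norm_mul, norm_pow, norm_pow]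
      apply hkey _ _ _ _ (by omega)
      rw [Nat.le_div_iff_mul_le (by norm_num)]
      nlinarith
    have hy : ‖ζ ^ (3*(n+1)) * q ^ ((n+1)*(3*(n+1)+1)/2)‖ ≤ (‖ζ*q‖^3)^n := by
      rw [norm_mul, norm_pow, norm_pow]
      apply hkey _ _ _ _ (by omega)
      rw [Nat.le_div_iff_mul_le (by norm_num)]
      nlinarith
    calc ‖ζ ^ (3*n+2) * q ^ ((n+1)*(3*n+2)/2)
            + ζ ^ (3*(n+1)) * q ^ ((n+1)*(3*(n+1)+1)/2)‖
        ≤ ‖ζ ^ (3*n+2) * q ^ ((n+1)*(3*n+2)/2)‖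
            + ‖ζ ^ (3*(n+1)) * q ^ ((n+1)*(3*(n+1)+1)/2)‖ := norm_add_le _ _
      _ ≤ 2 * (‖ζ*q‖^3)^n := by linarith
  have hg1 : (‖ζ*q‖^3) < 1 := pow_lt_one₀ hr0 hζq (by norm_num)
  have hg0 : (0:ℝ) ≤ ‖ζ*q‖^3 := by positivity
  have ST : Summable T := by
    apply Summable.of_norm_bounded_eventually_nat (g := fun n => 2 * (‖ζ*q‖^3)^n)
      ((summable_geometric_of_lt_one hg0 hg1).mul_left 2)
    filter_upwards [eventually_ge_atTop 1] with n hn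
    exact hTbd n hn
  have hMB0 : 0 ≤ MB := tsum_nonneg (fun n => by rw [hB]; positivity)
  -- the remainder tends to zero
  have hrem : Tendsto (fun N : ℕ => (-1:ℂ)^N * ζ^(3*N) * q^(N*(3*N+1)/2)
      * ((∑' n, cc q (ζ*q^N) n) - 1)) atTop (𝓝 0) := by
    apply squeeze_zero_norm' (a := fun N => (MB + 1) * (‖ζ*q‖^3)^N)
    · filter_upwards [eventually_ge_atTop 2] with N hN
      have hnorm : ‖(-1:ℂ)^N * ζ^(3*N) * q^(N*(3*N+1)/2) * ((∑' n, cc q (ζ*q^N) n) - 1)‖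
          = ‖ζ‖^(3*N) * ‖q‖^(N*(3*N+1)/2) * ‖(∑' n, cc q (ζ*q^N) n) - 1‖ := by
        rw [norm_mul, norm_mul, norm_mul, norm_pow, norm_pow, norm_pow, norm_neg, norm_one,
            one_pow, one_mul]
      rw [hnorm]
      have hp : ‖ζ‖^(3*N) * ‖q‖^(N*(3*N+1)/2) ≤ (‖ζ*q‖^3)^N := by
        apply hkey _ _ _ _ (by omega)
        rw [Nat.le_div_iff_mul_le (by norm_num)]
        nlinarith
      have hf : ‖(∑' n, cc q (ζ*q^N) n) - 1‖ ≤ MB + 1 := by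
        calc ‖(∑' n, cc q (ζ*q^N) n) - 1‖
            ≤ ‖∑' n, cc q (ζ*q^N) n‖ + ‖(1:ℂ)‖ := norm_sub_le _ _
          _ ≤ MB + 1 := by rw [norm_one]; linarith [hbound N]
      calc ‖ζ‖^(3*N) * ‖q‖^(N*(3*N+1)/2) * ‖(∑' n, cc q (ζ*q^N) n) - 1‖
          ≤ (‖ζ*q‖^3)^N * (MB + 1) := by
            apply mul_le_mul hp hf (norm_nonneg _) (by positivity)
        _ = (MB + 1) * (‖ζ*q‖^3)^N := by ring
    · have h := (tendsto_pow_atTop_nhds_zero_of_lt_one hg0 hg1).const_mul (MB + 1)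
      simpa using h
  -- partial sums identity
  have hA : ∀ N : ℕ, 1 + ∑ n ∈ Finset.range N, T n
      = (∑' n, cc q ζ n) - (-1:ℂ)^N * ζ^(3*N) * q^(N*(3*N+1)/2)
        * ((∑' n, cc q (ζ*q^N) n) - 1) := by
    intro N
    have h1 := iter q ζ hq hfac N
    have h2 := bridge q ζ N
    rw [← hT] at h2
    linear_combination h2 - h1
  -- limits
  have hlim1 : Tendsto (fun N : ℕ => 1 + ∑ n ∈ Finset.range N, T n) atTop
      (𝓝 (1 + ∑' n, T n)) :=
    tendsto_const_nhds.add ST.hasSum.tendsto_sum_nat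
  have hlim2 : Tendsto (fun N : ℕ => 1 + ∑ n ∈ Finset.range N, T n) atTop
      (𝓝 ((∑' n, cc q ζ n) - 0)) := by
    apply Tendsto.congr _ (tendsto_const_nhds.sub hrem)
    intro N
    exact (hA N).symm
  have hfinal : 1 + ∑' n, T n = ∑' n, cc q ζ n := by
    have := tendsto_nhds_unique hlim1 hlim2
    rw [sub_zero] at this
    exact this
  rw [hfinal]
  exact tsum_congr (fun n => by simp only [cc])
end
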